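/- Let w, h ≥ 1 be natural numbers and let G be the grid of integer points {0, 1, …, w} × {0, 1, …, h} regarded as points of the real plane ℝ². Let ℓ be the line through two distinct points of G, let p be a point of G not on ℓ, and let q be a point of ℓ such that q has the same x-coordinate as p or the same y-coordinate as p. Then the Euclidean distance from p to q is at least 1/(2hw). -/

import Mathlib

/-- The set of integer grid points `{0, …, w} × {0, …, h}` viewed inside `ℝ²`. -/
def gridPts (w h : ℕ) : Set (ℝ × ℝ) :=
  {p | ∃ a b : ℕ, a ≤ w ∧ b ≤ h ∧ p = ((a : ℝ), (b : ℝ))}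

/-- The affine line through the two points `a` and `b` of `ℝ²`. -/
def lineThrough (a b : ℝ × ℝ) : Set (ℝ × ℝ) :=
  {x | ∃ t : ℝ, x = a + t • (b - a)}

set_option maxHeartbeats 1000000 in
theorem stmt9 (w h : ℕ) (hw : 1 ≤ w) (hh : 1 ≤ h)
    (a b : ℝ × ℝ) (ha : a ∈ gridPts w h) (hb : b ∈ gridPts w h) (hab : a ≠ b)
    (p : ℝ × ℝ) (hp : p ∈ gridPts w h) (hpl : p ∉ lineThrough a b)
    (q : ℝ × ℝ) (hq : q ∈ lineThrough a b)
    (hshare : q.1 = p.1 ∨ q.2 = p.2) :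
    1 / (2 * (h : ℝ) * (w : ℝ)) ≤ Real.sqrt ((p.1 - q.1) ^ 2 + (p.2 - q.2) ^ 2) := by
  obtain ⟨A1, A2, hA1, hA2, rfl⟩ := ha
  obtain ⟨B1, B2, hB1, hB2, rfl⟩ := hb
  obtain ⟨P1, P2, hP1, hP2, rfl⟩ := hp
  obtain ⟨t, ht⟩ := hq
  have hq1 : q.1 = (A1 : ℝ) + t * ((B1 : ℝ) - A1) := by
    rw [ht]; simp [Prod.smul_def]
  have hq2 : q.2 = (A2 : ℝ) + t * ((B2 : ℝ) - A2) := by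
    rw [ht]; simp [Prod.smul_def]
  obtain ⟨D, hD⟩ : ∃ D : ℝ, D = ((P2 : ℝ) - A2) * ((B1 : ℝ) - A1) - ((P1 : ℝ) - A1) * ((B2 : ℝ) - A2) := ⟨_, rfl⟩
  clear ht
  -- D is a nonzero integer
  have hDz : D = (((P2 : ℤ) - A2) * ((B1 : ℤ) - A1) - ((P1 : ℤ) - A1) * ((B2 : ℤ) - A2) : ℤ) := by
    rw [hD]; push_cast; ring
  have hDne : D ≠ 0 := by
    intro h0
    apply hpl
    by_cases hBA : (B1 : ℝ) = (A1 : ℝ)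
    · have hBA2 : (B2 : ℝ) ≠ (A2 : ℝ) := by
        intro h2; exact hab (by rw [Prod.mk.injEq]; exact ⟨hBA.symm, h2.symm⟩)
      have hP1A1 : (P1 : ℝ) = (A1 : ℝ) := by
        rw [hD, hBA] at h0
        have := mul_eq_zero.mp (by linarith [h0] : ((P1:ℝ) - A1) * ((B2:ℝ) - A2) = 0)
        rcases this with h | h
        · linarith
        · exact absurd (by linarith : (B2:ℝ) = A2) hBA2
      refine ⟨((P2 : ℝ) - A2) / ((B2 : ℝ) - A2), ?_⟩
      rw [Prod.mk.injEq]
      constructor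
      · simp [Prod.smul_def, hBA, hP1A1]
      · simp only [Prod.smul_def, Prod.snd_add, Prod.snd_sub]
        rw [smul_eq_mul, div_mul_cancel₀ _ (sub_ne_zero.mpr hBA2)]; ring
    · refine ⟨((P1 : ℝ) - A1) / ((B1 : ℝ) - A1), ?_⟩
      have hne : (B1 : ℝ) - A1 ≠ 0 := sub_ne_zero.mpr hBA
      rw [Prod.mk.injEq]
      constructor
      · simp only [Prod.smul_def, Prod.fst_add, Prod.fst_sub]
        rw [smul_eq_mul, div_mul_cancel₀ _ hne]; ring
      · simp only [Prod.smul_def, Prod.snd_add, Prod.snd_sub]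
        rw [hD] at h0
        rw [smul_eq_mul]; field_simp
        nlinarith [h0]
  have hDabs : (1 : ℝ) ≤ |D| := by
    rw [hDz]
    have : (((P2 : ℤ) - A2) * ((B1 : ℤ) - A1) - ((P1 : ℤ) - A1) * ((B2 : ℤ) - A2)) ≠ 0 := by
      intro h0; apply hDne; rw [hDz, h0]; simp
    rw [← Int.cast_abs]
    exact_mod_cast Int.one_le_abs this
  have hh' : (1 : ℝ) ≤ (h : ℝ) := by exact_mod_cast hh
  have hw' : (1 : ℝ) ≤ (w : ℝ) := by exact_mod_cast hw
  rcases hshare with hx | hy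
  · -- q.1 = p.1 = P1
    simp only at hx
    by_cases hBA : (B1 : ℝ) = (A1 : ℝ)
    · exfalso
      apply hpl
      have hP1A1 : (P1 : ℝ) = (A1 : ℝ) := by rw [← hx, hq1, hBA]; ring
      have hBA2 : (B2 : ℝ) ≠ (A2 : ℝ) := by
        intro h2; exact hab (by rw [Prod.mk.injEq]; exact ⟨hBA.symm, h2.symm⟩)
      refine ⟨((P2 : ℝ) - A2) / ((B2 : ℝ) - A2), ?_⟩
      rw [Prod.mk.injEq]
      constructor
      · simp [Prod.smul_def, hBA, hP1A1]
      · simp only [Prod.smul_def, Prod.snd_add, Prod.snd_sub]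
        rw [smul_eq_mul, div_mul_cancel₀ _ (sub_ne_zero.mpr hBA2)]; ring
    · have hne : (B1 : ℝ) - A1 ≠ 0 := sub_ne_zero.mpr hBA
      have ht' : t = ((P1 : ℝ) - A1) / ((B1 : ℝ) - A1) := by
        have h1 : (P1 : ℝ) = A1 + t * ((B1:ℝ) - A1) := hx ▸ hq1
        rw [eq_div_iff hne]; linarith
      have hdiff : (P2 : ℝ) - q.2 = D / ((B1 : ℝ) - A1) := by
        rw [hq2, ht', hD]; field_simp; ring
      have heq : Real.sqrt ((((P1:ℝ),(P2:ℝ)).1 - q.1) ^ 2 + (((P1:ℝ),(P2:ℝ)).2 - q.2) ^ 2)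
          = |D| / |(B1 : ℝ) - A1| := by
        simp only [hx]
        rw [show ((P1:ℝ) - (P1:ℝ)) ^ 2 = 0 by ring, zero_add, Real.sqrt_sq_eq_abs]
        rw [hdiff, abs_div]
      rw [heq]
      have habs : |(B1 : ℝ) - A1| ≤ 2 * (h : ℝ) * w := by
        rw [abs_sub_le_iff]
        constructor <;> nlinarith [show (B1:ℝ) ≤ w from by exact_mod_cast hB1,
          show (A1:ℝ) ≤ w from by exact_mod_cast hA1,
          show (0:ℝ) ≤ B1 from by positivity, show (0:ℝ) ≤ A1 from by positivity]
      have hpos : 0 < |(B1 : ℝ) - A1| := abs_pos.mpr hne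
      rw [div_le_div_iff₀ (by positivity) hpos]
      nlinarith [abs_nonneg D]
  · -- q.2 = p.2 = P2
    simp only at hy
    by_cases hBA : (B2 : ℝ) = (A2 : ℝ)
    · exfalso
      apply hpl
      have hP2A2 : (P2 : ℝ) = (A2 : ℝ) := by rw [← hy, hq2, hBA]; ring
      have hBA1 : (B1 : ℝ) ≠ (A1 : ℝ) := by
        intro h2; exact hab (by rw [Prod.mk.injEq]; exact ⟨h2.symm, hBA.symm⟩)
      refine ⟨((P1 : ℝ) - A1) / ((B1 : ℝ) - A1), ?_⟩
      rw [Prod.mk.injEq]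
      constructor
      · simp only [Prod.smul_def, Prod.fst_add, Prod.fst_sub]
        rw [smul_eq_mul, div_mul_cancel₀ _ (sub_ne_zero.mpr hBA1)]; ring
      · simp [Prod.smul_def, hBA, hP2A2]
    · have hne : (B2 : ℝ) - A2 ≠ 0 := sub_ne_zero.mpr hBA
      have ht' : t = ((P2 : ℝ) - A2) / ((B2 : ℝ) - A2) := by
        have h1 : (P2 : ℝ) = A2 + t * ((B2:ℝ) - A2) := hy ▸ hq2
        rw [eq_div_iff hne]; linarith
      have hdiff : (P1 : ℝ) - q.1 = -D / ((B2 : ℝ) - A2) := by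
        rw [hq1, ht', hD]; field_simp; ring
      have heq : Real.sqrt ((((P1:ℝ),(P2:ℝ)).1 - q.1) ^ 2 + (((P1:ℝ),(P2:ℝ)).2 - q.2) ^ 2)
          = |D| / |(B2 : ℝ) - A2| := by
        simp only [hy]
        rw [show ((P2:ℝ) - (P2:ℝ)) ^ 2 = 0 by ring, add_zero, Real.sqrt_sq_eq_abs]
        rw [hdiff, abs_div, abs_neg]
      rw [heq]
      have habs : |(B2 : ℝ) - A2| ≤ 2 * (h : ℝ) * w := by
        rw [abs_sub_le_iff]
        constructor <;> nlinarith [show (B2:ℝ) ≤ h from by exact_mod_cast hB2,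
          show (A2:ℝ) ≤ h from by exact_mod_cast hA2,
          show (0:ℝ) ≤ B2 from by positivity, show (0:ℝ) ≤ A2 from by positivity]
      have hpos : 0 < |(B2 : ℝ) - A2| := abs_pos.mpr hne
      rw [div_le_div_iff₀ (by positivity) hpos]
      nlinarith [abs_nonneg D]
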